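/- Validity criterion via surjectivity. In the piecewise monotone setting, the φ-expansion is valid if and only if φ̄_∞ is well-defined on all of A^ℕ (i.e. limₙ φ̄ₙ(x) exists for every x ∈ A^ℕ) and the resulting map φ̄_∞ : A^ℕ → [0,1] is surjective. -/

import Mathlib

open Set Filter Topology

/-- A piecewise monotone dynamical system on `[0,1]`: partition points
`0 = a 0 < a 1 < ⋯ < a k = 1` (`k ≥ 2`), branch intervals `I j = (a j, a (j+1))`,
on each of which `f j` is a continuous strictly monotone map into `[0,1]` with
inverse `g j`; `inc j` records whether `f j` is increasing; the covering condition
`(⋃ᵢ Jᵢ) ∩ I j = I j` (i.e. `I j ⊆ ⋃ᵢ Jᵢ`) holds, where `J i = f i '' I i`. -/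
structure PMS where
  k : ℕ
  a : ℕ → ℝ
  f : ℕ → ℝ → ℝ
  g : ℕ → ℝ → ℝ
  inc : ℕ → Bool
  two_le_k : 2 ≤ k
  a_zero : a 0 = 0
  a_last : a k = 1
  a_mono : ∀ i j, i < j → j ≤ k → a i < a j
  f_cont : ∀ j, j < k → ContinuousOn (f j) (Icc (a j) (a (j + 1)))
  f_mono : ∀ j, j < k → inc j = true → StrictMonoOn (f j) (Icc (a j) (a (j + 1)))
  f_anti : ∀ j, j < k → inc j = false → StrictAntiOn (f j) (Icc (a j) (a (j + 1)))
  f_range : ∀ j, j < k → MapsTo (f j) (Icc (a j) (a (j + 1))) (Icc (0 : ℝ) 1)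
  g_inv : ∀ j, j < k → ∀ t ∈ Icc (a j) (a (j + 1)), g j (f j t) = t
  cover : ∀ j, j < k →
    Ioo (a j) (a (j + 1)) ⊆ ⋃ i ∈ Finset.range k, f i '' Ioo (a i) (a (i + 1))

namespace PMS

/-- The open branch interval `I j = (a j, a (j+1))`. -/
def I (P : PMS) (j : ℕ) : Set ℝ := Ioo (P.a j) (P.a (j + 1))

open Classical in
/-- The index of the branch interval containing `x` (junk value `0` if there is none). -/
noncomputable def idx (P : PMS) (x : ℝ) : ℕ :=
  if h : ∃ j, j < P.k ∧ x ∈ P.I j then h.choose else 0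

open Classical in
/-- The dynamics: `T x = f j x` for `x ∈ I j` (junk value `0` on `S₀`, where `T` is
left undefined in the paper). -/
noncomputable def T (P : PMS) (x : ℝ) : ℝ :=
  if ∃ j, j < P.k ∧ x ∈ P.I j then P.f (P.idx x) x else 0

/-- `S₀ = [0,1] ∖ ⋃ⱼ I j`. -/
def S0 (P : PMS) : Set ℝ := Icc 0 1 \ ⋃ j ∈ Finset.range P.k, P.I j

/-- The singular set `S`: points whose orbit hits `S₀`. -/
def S (P : PMS) : Set ℝ :=
  {x ∈ Icc (0 : ℝ) 1 | ∃ m, P.T^[m] x ∈ P.S0 ∧ ∀ i, i < m → P.T^[i] x ∉ P.S0}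

/-- The coding map (itinerary): `(code x) n = j` iff `Tⁿ x ∈ I j` (for `x ∈ [0,1] ∖ S`). -/
noncomputable def code (P : PMS) (x : ℝ) : ℕ → ℕ := fun n => P.idx (P.T^[n] x)

/-- The map `φ̄` on `[0,k]` as a function of `j ∈ A` and `t ∈ [0,1]`, a point of
`[j, j+1]` being written `j + t`. -/
noncomputable def phibarJ (P : PMS) (j : ℕ) (t : ℝ) : ℝ :=
  if P.inc j then
    if t ≤ P.f j (P.a j) then P.a j
    else if P.f j (P.a (j + 1)) ≤ t then P.a (j + 1)
    else P.g j t
  else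
    if t ≤ P.f j (P.a (j + 1)) then P.a (j + 1)
    else if P.f j (P.a j) ≤ t then P.a j
    else P.g j t

/-- `φ̄ₙ(x) = φ̄(x₀ + φ̄(x₁ + ⋯ + φ̄(x_{n-1})⋯))`. -/
noncomputable def phibarN (P : PMS) : ℕ → (ℕ → ℕ) → ℝ
  | 0, _ => 0
  | n + 1, x => P.phibarJ (x 0) (P.phibarN n fun i => x (i + 1))

/-- `φ̄_∞(x) = limₙ φ̄ₙ(x)` (a junk value where the limit does not exist). -/
noncomputable def phibarInf (P : PMS) (x : ℕ → ℕ) : ℝ :=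
  limUnder atTop fun n => P.phibarN n x

/-- The φ-expansion is well-defined: `limₙ φ̄ₙ(x)` exists for every string `x ∈ A^ℕ`. -/
def WellDefined (P : PMS) : Prop :=
  ∀ x : ℕ → ℕ, (∀ n, x n < P.k) →
    ∃ L : ℝ, Tendsto (fun n => P.phibarN n x) atTop (𝓝 L)

/-- The φ-expansion is valid: for every `x ∈ [0,1] ∖ S`, `limₙ φ̄ₙ(i(x)) = x`. -/
def Valid (P : PMS) : Prop :=
  ∀ x ∈ Icc (0 : ℝ) 1 \ P.S,
    Tendsto (fun n => P.phibarN n (P.code x)) atTop (𝓝 x)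

end PMS

namespace PMS

variable (P : PMS)

lemma a_mono_le {i j : ℕ} (hij : i ≤ j) (hj : j ≤ P.k) : P.a i ≤ P.a j := by
  rcases eq_or_lt_of_le hij with h | h
  · exact h ▸ le_rfl
  · exact (P.a_mono i j h hj).le

lemma a_lt {j : ℕ} (hj : j < P.k) : P.a j < P.a (j + 1) :=
  P.a_mono j (j + 1) (Nat.lt_succ_self j) hj

lemma a_mem {i : ℕ} (hi : i ≤ P.k) : P.a i ∈ Icc (0 : ℝ) 1 :=
  ⟨P.a_zero ▸ P.a_mono_le (Nat.zero_le i) hi, P.a_last ▸ P.a_mono_le hi le_rfl⟩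

lemma Icc_subset_unit {j : ℕ} (hj : j < P.k) :
    Icc (P.a j) (P.a (j + 1)) ⊆ Icc (0 : ℝ) 1 :=
  Icc_subset_Icc (P.a_mem hj.le).1 (P.a_mem hj).2

lemma I_subset_Icc {j : ℕ} (hj : j < P.k) : P.I j ⊆ Icc (0 : ℝ) 1 :=
  fun _ h => P.Icc_subset_unit hj (Ioo_subset_Icc_self h)

lemma index_unique {i j : ℕ} {u : ℝ} (hi : i < P.k) (hj : j < P.k)
    (hu : u ∈ P.I j) (hu' : u ∈ Icc (P.a i) (P.a (i + 1))) : i = j := by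
  rcases lt_trichotomy i j with h | h | h
  · exfalso
    have h1 : P.a (i + 1) ≤ P.a j := P.a_mono_le h hj.le
    have := hu.1; have := hu'.2; linarith
  · exact h
  · exfalso
    have h1 : P.a (j + 1) ≤ P.a i := P.a_mono_le h hi.le
    have := hu.2; have := hu'.1; linarith

lemma idx_eq {j : ℕ} {u : ℝ} (hj : j < P.k) (hu : u ∈ P.I j) : P.idx u = j := by
  classical
  have hex : ∃ i, i < P.k ∧ u ∈ P.I i := ⟨j, hj, hu⟩
  rw [idx, dif_pos hex]
  obtain ⟨hk, hmem⟩ := hex.choose_spec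
  exact P.index_unique hk hj hu (Ioo_subset_Icc_self hmem)

lemma T_eq {j : ℕ} {u : ℝ} (hj : j < P.k) (hu : u ∈ P.I j) : P.T u = P.f j u := by
  classical
  rw [T, if_pos ⟨j, hj, hu⟩, P.idx_eq hj hu]

end PMS
namespace PMS

variable (P : PMS)

lemma haj {j : ℕ} (hj : j < P.k) : P.a j ∈ Icc (P.a j) (P.a (j + 1)) :=
  left_mem_Icc.mpr (P.a_lt hj).le

lemma haj' {j : ℕ} (hj : j < P.k) : P.a (j + 1) ∈ Icc (P.a j) (P.a (j + 1)) :=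
  right_mem_Icc.mpr (P.a_lt hj).le

lemma exists_preimage {j : ℕ} (hj : j < P.k) {t : ℝ}
    (h1 : min (P.f j (P.a j)) (P.f j (P.a (j + 1))) ≤ t)
    (h2 : t ≤ max (P.f j (P.a j)) (P.f j (P.a (j + 1)))) :
    ∃ s ∈ Icc (P.a j) (P.a (j + 1)), P.f j s = t := by
  have hle : P.a j ≤ P.a (j + 1) := (P.a_lt hj).le
  have hiv := intermediate_value_uIcc (f := P.f j) (a := P.a j) (b := P.a (j + 1))
    (by rw [uIcc_of_le hle]; exact P.f_cont j hj)
  have ht : t ∈ uIcc (P.f j (P.a j)) (P.f j (P.a (j + 1))) := by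
    rw [Set.uIcc, Set.mem_Icc]; exact ⟨h1, h2⟩
  obtain ⟨s, hs, hfs⟩ := hiv ht
  rw [uIcc_of_le hle] at hs
  exact ⟨s, hs, hfs⟩

lemma mM_inc {j : ℕ} (hj : j < P.k) (hinc : P.inc j = true) :
    P.f j (P.a j) < P.f j (P.a (j + 1)) :=
  P.f_mono j hj hinc (P.haj hj) (P.haj' hj) (P.a_lt hj)

lemma mM_anti {j : ℕ} (hj : j < P.k) (hinc : P.inc j = false) :
    P.f j (P.a (j + 1)) < P.f j (P.a j) :=
  P.f_anti j hj hinc (P.haj hj) (P.haj' hj) (P.a_lt hj)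

lemma g_spec_inc {j : ℕ} (hj : j < P.k) (hinc : P.inc j = true) {t : ℝ}
    (h1 : ¬ t ≤ P.f j (P.a j)) (h2 : ¬ P.f j (P.a (j + 1)) ≤ t) :
    P.g j t ∈ Icc (P.a j) (P.a (j + 1)) ∧ P.f j (P.g j t) = t := by
  obtain ⟨s, hs, hfs⟩ := P.exists_preimage hj
    (t := t) (by rw [min_eq_left (P.mM_inc hj hinc).le]; linarith)
    (by rw [max_eq_right (P.mM_inc hj hinc).le]; linarith)
  rw [← hfs, P.g_inv j hj s hs]
  exact ⟨hs, rfl⟩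

lemma g_spec_anti {j : ℕ} (hj : j < P.k) (hinc : P.inc j = false) {t : ℝ}
    (h1 : ¬ t ≤ P.f j (P.a (j + 1))) (h2 : ¬ P.f j (P.a j) ≤ t) :
    P.g j t ∈ Icc (P.a j) (P.a (j + 1)) ∧ P.f j (P.g j t) = t := by
  obtain ⟨s, hs, hfs⟩ := P.exists_preimage hj
    (t := t) (by rw [min_eq_right (P.mM_anti hj hinc).le]; linarith)
    (by rw [max_eq_left (P.mM_anti hj hinc).le]; linarith)
  rw [← hfs, P.g_inv j hj s hs]
  exact ⟨hs, rfl⟩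

lemma phibarJ_mem {j : ℕ} (hj : j < P.k) (t : ℝ) :
    P.phibarJ j t ∈ Icc (P.a j) (P.a (j + 1)) := by
  have hle := (P.a_lt hj).le
  cases hinc : P.inc j with
  | true =>
    simp only [phibarJ, hinc, if_true]
    split_ifs with h1 h2
    · exact P.haj hj
    · exact P.haj' hj
    · exact (P.g_spec_inc hj hinc h1 h2).1
  | false =>
    simp only [phibarJ, hinc, Bool.false_eq_true, if_false]
    split_ifs with h1 h2
    · exact P.haj' hj
    · exact P.haj hj
    · exact (P.g_spec_anti hj hinc h1 h2).1

lemma phibarJ_comp_f {j : ℕ} (hj : j < P.k) {s : ℝ}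
    (hs : s ∈ Icc (P.a j) (P.a (j + 1))) : P.phibarJ j (P.f j s) = s := by
  cases hinc : P.inc j with
  | true =>
    have hm := (P.f_mono j hj hinc).monotoneOn
    have hinj := (P.f_mono j hj hinc).injOn
    simp only [phibarJ, hinc, if_true]
    split_ifs with h1 h2
    · have : P.f j (P.a j) ≤ P.f j s := hm (P.haj hj) hs hs.1
      exact (hinj hs (P.haj hj) (le_antisymm h1 this)).symm
    · have : P.f j s ≤ P.f j (P.a (j + 1)) := hm hs (P.haj' hj) hs.2
      exact (hinj hs (P.haj' hj) (le_antisymm this h2)).symm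
    · exact P.g_inv j hj s hs
  | false =>
    have hm := (P.f_anti j hj hinc).antitoneOn
    have hinj := (P.f_anti j hj hinc).injOn
    simp only [phibarJ, hinc, Bool.false_eq_true, if_false]
    split_ifs with h1 h2
    · have : P.f j (P.a (j + 1)) ≤ P.f j s := hm hs (P.haj' hj) hs.2
      exact (hinj hs (P.haj' hj) (le_antisymm h1 this)).symm
    · have : P.f j s ≤ P.f j (P.a j) := hm (P.haj hj) hs hs.1
      exact (hinj hs (P.haj hj) (le_antisymm this h2)).symm
    · exact P.g_inv j hj s hs

lemma phibarJ_mono {j : ℕ} (hj : j < P.k) (hinc : P.inc j = true) :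
    Monotone (P.phibarJ j) := by
  intro t1 t2 h12
  have hmM := P.mM_inc hj hinc
  simp only [phibarJ, hinc, if_true]
  split_ifs with h1 h2 h3 h4 h5 h6 h7 h8
  · exact le_rfl
  · exact (P.a_lt hj).le
  · exact (P.g_spec_inc hj hinc h2 h3).1.1
  · linarith
  · exact le_rfl
  · linarith
  · linarith
  · exact (P.g_spec_inc hj hinc h1 h4).1.2
  · have hs1 := P.g_spec_inc hj hinc h1 h4
    have hs2 := P.g_spec_inc hj hinc h7 h8
    by_contra hlt
    push_neg at hlt
    have := P.f_mono j hj hinc hs2.1 hs1.1 hlt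
    rw [hs1.2, hs2.2] at this
    linarith

lemma phibarJ_anti {j : ℕ} (hj : j < P.k) (hinc : P.inc j = false) :
    Antitone (P.phibarJ j) := by
  intro t1 t2 h12
  have hmM := P.mM_anti hj hinc
  simp only [phibarJ, hinc, Bool.false_eq_true, if_false]
  split_ifs with h1 h2 h3 h4 h5 h6 h7 h8
  · exact le_rfl
  · linarith
  · linarith
  · exact (P.a_lt hj).le
  · exact le_rfl
  · exact (P.g_spec_anti hj hinc h5 h6).1.1
  · exact (P.g_spec_anti hj hinc h1 h4).1.2
  · linarith
  · have hs1 := P.g_spec_anti hj hinc h7 h8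
    have hs2 := P.g_spec_anti hj hinc h1 h4
    by_contra hlt
    push_neg at hlt
    have := P.f_anti j hj hinc hs1.1 hs2.1 hlt
    rw [hs1.2, hs2.2] at this
    linarith

lemma phibarJ_zero {j : ℕ} (hj : j < P.k) :
    P.phibarJ j 0 = if P.inc j then P.a j else P.a (j + 1) := by
  cases hinc : P.inc j with
  | true =>
    have h0 : (0 : ℝ) ≤ P.f j (P.a j) := (P.f_range j hj (P.haj hj)).1
    simp only [phibarJ, hinc, if_true, if_pos h0]
  | false =>
    have h0 : (0 : ℝ) ≤ P.f j (P.a (j + 1)) := (P.f_range j hj (P.haj' hj)).1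
    simp only [phibarJ, hinc, Bool.false_eq_true, if_false, if_pos h0]

lemma phibarJ_one {j : ℕ} (hj : j < P.k) :
    P.phibarJ j 1 = if P.inc j then P.a (j + 1) else P.a j := by
  cases hinc : P.inc j with
  | true =>
    have hM : P.f j (P.a (j + 1)) ≤ 1 := (P.f_range j hj (P.haj' hj)).2
    have hm : P.f j (P.a j) < 1 := lt_of_lt_of_le (P.mM_inc hj hinc) hM
    simp only [phibarJ, hinc, if_true, if_neg (not_le.mpr hm), if_pos hM]
  | false =>
    have hM : P.f j (P.a j) ≤ 1 := (P.f_range j hj (P.haj hj)).2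
    have hm : P.f j (P.a (j + 1)) < 1 := lt_of_lt_of_le (P.mM_anti hj hinc) hM
    simp only [phibarJ, hinc, Bool.false_eq_true, if_false,
      if_neg (not_le.mpr hm), if_pos hM]

end PMS
namespace PMS

variable (P : PMS)

lemma phibarJ_lt_of_inc {j : ℕ} (hj : j < P.k) (hinc : P.inc j = true) {y t : ℝ}
    (hy : y ∈ P.I j) (ht : t < P.f j y) : P.phibarJ j t < y := by
  have hyI : y ∈ Icc (P.a j) (P.a (j + 1)) := Ioo_subset_Icc_self hy
  have hlt : P.f j y < P.f j (P.a (j + 1)) :=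
    P.f_mono j hj hinc hyI (P.haj' hj) hy.2
  by_cases h1 : t ≤ P.f j (P.a j)
  · simp only [phibarJ, hinc, if_true, if_pos h1]; exact hy.1
  · have h2 : ¬ P.f j (P.a (j + 1)) ≤ t := by push_neg; linarith
    simp only [phibarJ, hinc, if_true, if_neg h1, if_neg h2]
    have hgs := P.g_spec_inc hj hinc h1 h2
    by_contra hcon
    push_neg at hcon
    have := (P.f_mono j hj hinc).monotoneOn hyI hgs.1 hcon
    rw [hgs.2] at this
    linarith

lemma lt_phibarJ_of_inc {j : ℕ} (hj : j < P.k) (hinc : P.inc j = true) {y t : ℝ}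
    (hy : y ∈ P.I j) (ht : P.f j y < t) : y < P.phibarJ j t := by
  have hyI : y ∈ Icc (P.a j) (P.a (j + 1)) := Ioo_subset_Icc_self hy
  have hgt : P.f j (P.a j) < P.f j y :=
    P.f_mono j hj hinc (P.haj hj) hyI hy.1
  have h1 : ¬ t ≤ P.f j (P.a j) := by push_neg; linarith
  by_cases h2 : P.f j (P.a (j + 1)) ≤ t
  · simp only [phibarJ, hinc, if_true, if_neg h1, if_pos h2]; exact hy.2
  · simp only [phibarJ, hinc, if_true, if_neg h1, if_neg h2]
    have hgs := P.g_spec_inc hj hinc h1 h2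
    by_contra hcon
    push_neg at hcon
    have := (P.f_mono j hj hinc).monotoneOn hgs.1 hyI hcon
    rw [hgs.2] at this
    linarith

lemma phibarJ_lt_of_anti {j : ℕ} (hj : j < P.k) (hinc : P.inc j = false) {y t : ℝ}
    (hy : y ∈ P.I j) (ht : P.f j y < t) : P.phibarJ j t < y := by
  have hyI : y ∈ Icc (P.a j) (P.a (j + 1)) := Ioo_subset_Icc_self hy
  have hgt : P.f j (P.a (j + 1)) < P.f j y :=
    P.f_anti j hj hinc hyI (P.haj' hj) hy.2
  have h1 : ¬ t ≤ P.f j (P.a (j + 1)) := by push_neg; linarith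
  by_cases h2 : P.f j (P.a j) ≤ t
  · simp only [phibarJ, hinc, Bool.false_eq_true, if_false, if_neg h1, if_pos h2]
    exact hy.1
  · simp only [phibarJ, hinc, Bool.false_eq_true, if_false, if_neg h1, if_neg h2]
    have hgs := P.g_spec_anti hj hinc h1 h2
    by_contra hcon
    push_neg at hcon
    have := (P.f_anti j hj hinc).antitoneOn hyI hgs.1 hcon
    rw [hgs.2] at this
    linarith

lemma lt_phibarJ_of_anti {j : ℕ} (hj : j < P.k) (hinc : P.inc j = false) {y t : ℝ}
    (hy : y ∈ P.I j) (ht : t < P.f j y) : y < P.phibarJ j t := by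
  have hyI : y ∈ Icc (P.a j) (P.a (j + 1)) := Ioo_subset_Icc_self hy
  have hlt : P.f j y < P.f j (P.a j) :=
    P.f_anti j hj hinc (P.haj hj) hyI hy.1
  by_cases h1 : t ≤ P.f j (P.a (j + 1))
  · simp only [phibarJ, hinc, Bool.false_eq_true, if_false, if_pos h1]
    exact hy.2
  · have h2 : ¬ P.f j (P.a j) ≤ t := by push_neg; linarith
    simp only [phibarJ, hinc, Bool.false_eq_true, if_false, if_neg h1, if_neg h2]
    have hgs := P.g_spec_anti hj hinc h1 h2
    by_contra hcon
    push_neg at hcon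
    have := (P.f_anti j hj hinc).antitoneOn hgs.1 hyI hcon
    rw [hgs.2] at this
    linarith

lemma tendsto_of_phibarJ {j : ℕ} (hj : j < P.k) {u : ℕ → ℝ} {y : ℝ}
    (hy : y ∈ P.I j)
    (h : Tendsto (fun n => P.phibarJ j (u n)) atTop (𝓝 y)) :
    Tendsto u atTop (𝓝 (P.f j y)) := by
  set s := P.f j y with hs
  rw [Metric.tendsto_atTop]
  intro ε hε
  cases hinc : P.inc j with
  | true =>
    have hmono := P.phibarJ_mono hj hinc
    have hcm : P.phibarJ j (s - ε) < y :=
      P.phibarJ_lt_of_inc hj hinc hy (by linarith)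
    have hcp : y < P.phibarJ j (s + ε) :=
      P.lt_phibarJ_of_inc hj hinc hy (by linarith)
    have hev := h (Ioo_mem_nhds hcm hcp)
    rw [mem_map, mem_atTop_sets] at hev
    obtain ⟨N, hN⟩ := hev
    refine ⟨N, fun n hn => ?_⟩
    have hmem := hN n hn
    simp only [Set.mem_preimage, Set.mem_Ioo] at hmem
    rw [Real.dist_eq, abs_sub_lt_iff]
    constructor
    · by_contra hcon
      push_neg at hcon
      exact absurd (hmono (by linarith : s + ε ≤ u n)) (not_le.mpr hmem.2)
    · by_contra hcon
      push_neg at hcon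
      exact absurd (hmono (by linarith : u n ≤ s - ε)) (not_le.mpr hmem.1)
  | false =>
    have hanti := P.phibarJ_anti hj hinc
    have hcm : P.phibarJ j (s + ε) < y :=
      P.phibarJ_lt_of_anti hj hinc hy (by linarith)
    have hcp : y < P.phibarJ j (s - ε) :=
      P.lt_phibarJ_of_anti hj hinc hy (by linarith)
    have hev := h (Ioo_mem_nhds hcm hcp)
    rw [mem_map, mem_atTop_sets] at hev
    obtain ⟨N, hN⟩ := hev
    refine ⟨N, fun n hn => ?_⟩
    have hmem := hN n hn
    simp only [Set.mem_preimage, Set.mem_Ioo] at hmem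
    rw [Real.dist_eq, abs_sub_lt_iff]
    constructor
    · by_contra hcon
      push_neg at hcon
      exact absurd (hanti (by linarith : s + ε ≤ u n)) (not_le.mpr hmem.1)
    · by_contra hcon
      push_neg at hcon
      exact absurd (hanti (by linarith : u n ≤ s - ε)) (not_le.mpr hmem.2)

end PMS
namespace PMS

/-- `psi n x t = Φ_{x₀}(Φ_{x₁}(⋯Φ_{x_{n-1}}(t)⋯))`. -/
noncomputable def psi (P : PMS) : ℕ → (ℕ → ℕ) → ℝ → ℝ
  | 0, _, t => t
  | n + 1, x, t => P.phibarJ (x 0) (P.psi n (fun i => x (i + 1)) t)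

variable (P : PMS)

lemma phibarN_eq_psi : ∀ (n : ℕ) (x : ℕ → ℕ), P.phibarN n x = P.psi n x 0 := by
  intro n
  induction n with
  | zero => intro x; rfl
  | succ n ih => intro x; rw [phibarN, psi, ih]

lemma psi_prefix : ∀ (n : ℕ) (x x' : ℕ → ℕ) (t : ℝ),
    (∀ i < n, x i = x' i) → P.psi n x t = P.psi n x' t := by
  intro n
  induction n with
  | zero => intro x x' t _; rfl
  | succ n ih =>
    intro x x' t h
    rw [psi, psi, h 0 (Nat.succ_pos n),
      ih (fun i => x (i + 1)) (fun i => x' (i + 1)) t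
        (fun i hi => h (i + 1) (Nat.succ_lt_succ hi))]

lemma psi_succ_right : ∀ (n : ℕ) (x : ℕ → ℕ) (t : ℝ),
    P.psi (n + 1) x t = P.psi n x (P.phibarJ (x n) t) := by
  intro n
  induction n with
  | zero => intro x t; rfl
  | succ n ih =>
    intro x t
    rw [psi, ih (fun i => x (i + 1)) t]
    rfl

lemma psi_monoAnti (n : ℕ) (x : ℕ → ℕ) (hx : ∀ i, x i < P.k) :
    Monotone (P.psi n x) ∨ Antitone (P.psi n x) := by
  induction n generalizing x with
  | zero => exact Or.inl (fun s t h => h)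
  | succ n ih =>
    have hx' : ∀ i, x (i + 1) < P.k := fun i => hx (i + 1)
    have hcomp : ∀ t, P.psi (n + 1) x t
        = P.phibarJ (x 0) (P.psi n (fun i => x (i + 1)) t) := fun t => rfl
    cases hinc : P.inc (x 0) with
    | true =>
      have hm := P.phibarJ_mono (hx 0) hinc
      rcases ih (fun i => x (i + 1)) hx' with h | h
      · exact Or.inl (fun s t hst => by rw [hcomp, hcomp]; exact hm (h hst))
      · exact Or.inr (fun s t hst => by rw [hcomp, hcomp]; exact hm (h hst))
    | false =>
      have hm := P.phibarJ_anti (hx 0) hinc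
      rcases ih (fun i => x (i + 1)) hx' with h | h
      · exact Or.inr (fun s t hst => by rw [hcomp, hcomp]; exact hm (h hst))
      · exact Or.inl (fun s t hst => by rw [hcomp, hcomp]; exact hm (h hst))

/-- Left endpoint of the `n`-th nested interval. -/
noncomputable def lE (P : PMS) (x : ℕ → ℕ) (n : ℕ) : ℝ :=
  min (P.psi n x 0) (P.psi n x 1)

/-- Right endpoint of the `n`-th nested interval. -/
noncomputable def rE (P : PMS) (x : ℕ → ℕ) (n : ℕ) : ℝ :=
  max (P.psi n x 0) (P.psi n x 1)

lemma psi_between {n : ℕ} {x : ℕ → ℕ} (hx : ∀ i, x i < P.k) {u : ℝ}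
    (hu : u ∈ Icc (0 : ℝ) 1) :
    P.lE x n ≤ P.psi n x u ∧ P.psi n x u ≤ P.rE x n := by
  rcases P.psi_monoAnti n x hx with h | h
  · exact ⟨le_trans (min_le_left _ _) (h hu.1), le_trans (h hu.2) (le_max_right _ _)⟩
  · exact ⟨le_trans (min_le_right _ _) (h hu.2), le_trans (h hu.1) (le_max_left _ _)⟩

lemma phibarJ_mem_unit {j : ℕ} (hj : j < P.k) (t : ℝ) :
    P.phibarJ j t ∈ Icc (0 : ℝ) 1 :=
  P.Icc_subset_unit hj (P.phibarJ_mem hj t)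

lemma lE_succ {x : ℕ → ℕ} (hx : ∀ i, x i < P.k) (n : ℕ) :
    P.lE x n ≤ P.lE x (n + 1) ∧ P.rE x (n + 1) ≤ P.rE x n := by
  have h0 := P.psi_between (n := n) hx (P.phibarJ_mem_unit (hx n) 0)
  have h1 := P.psi_between (n := n) hx (P.phibarJ_mem_unit (hx n) 1)
  have e0 : P.lE x (n + 1)
      = min (P.psi n x (P.phibarJ (x n) 0)) (P.psi n x (P.phibarJ (x n) 1)) := by
    rw [lE, P.psi_succ_right n x 0, P.psi_succ_right n x 1]
  have e1 : P.rE x (n + 1)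
      = max (P.psi n x (P.phibarJ (x n) 0)) (P.psi n x (P.phibarJ (x n) 1)) := by
    rw [rE, P.psi_succ_right n x 0, P.psi_succ_right n x 1]
  exact ⟨e0 ▸ le_min h0.1 h1.1, e1 ▸ max_le h0.2 h1.2⟩

lemma lE_monotone {x : ℕ → ℕ} (hx : ∀ i, x i < P.k) : Monotone (P.lE x) :=
  monotone_nat_of_le_succ (fun n => (P.lE_succ hx n).1)

lemma rE_antitone {x : ℕ → ℕ} (hx : ∀ i, x i < P.k) : Antitone (P.rE x) :=
  antitone_nat_of_succ_le (fun n => (P.lE_succ hx n).2)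

lemma lE_le_rE (x : ℕ → ℕ) (n : ℕ) : P.lE x n ≤ P.rE x n := min_le_max

lemma lE_le_rE' {x : ℕ → ℕ} (hx : ∀ i, x i < P.k) (n m : ℕ) :
    P.lE x n ≤ P.rE x m :=
  le_trans (P.lE_monotone hx (le_max_left n m))
    (le_trans (P.lE_le_rE x (max n m)) (P.rE_antitone hx (le_max_right n m)))

lemma lE_zero (x : ℕ → ℕ) : P.lE x 0 = 0 := by
  simp [lE, psi]

lemma rE_zero (x : ℕ → ℕ) : P.rE x 0 = 1 := by
  simp [rE, psi]

lemma lE_bddAbove {x : ℕ → ℕ} (hx : ∀ i, x i < P.k) :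
    BddAbove (Set.range (P.lE x)) := by
  refine ⟨1, fun v hv => ?_⟩
  obtain ⟨n, rfl⟩ := hv
  calc P.lE x n ≤ P.rE x 0 := P.lE_le_rE' hx n 0
  _ = 1 := P.rE_zero x

lemma rE_bddBelow {x : ℕ → ℕ} (hx : ∀ i, x i < P.k) :
    BddBelow (Set.range (P.rE x)) := by
  refine ⟨0, fun v hv => ?_⟩
  obtain ⟨n, rfl⟩ := hv
  calc (0 : ℝ) = P.lE x 0 := (P.lE_zero x).symm
  _ ≤ P.rE x n := P.lE_le_rE' hx 0 n

lemma tendsto_lE {x : ℕ → ℕ} (hx : ∀ i, x i < P.k) :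
    Tendsto (P.lE x) atTop (𝓝 (⨆ n, P.lE x n)) :=
  tendsto_atTop_ciSup (P.lE_monotone hx) (P.lE_bddAbove hx)

lemma tendsto_rE {x : ℕ → ℕ} (hx : ∀ i, x i < P.k) :
    Tendsto (P.rE x) atTop (𝓝 (⨅ n, P.rE x n)) :=
  tendsto_atTop_ciInf (P.rE_antitone hx) (P.rE_bddBelow hx)

lemma sup_le_inf {x : ℕ → ℕ} (hx : ∀ i, x i < P.k) :
    (⨆ n, P.lE x n) ≤ ⨅ n, P.rE x n :=
  ciSup_le (fun n => le_ciInf (fun m => P.lE_le_rE' hx n m))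

lemma lE_le_sup {x : ℕ → ℕ} (hx : ∀ i, x i < P.k) (n : ℕ) :
    P.lE x n ≤ ⨆ m, P.lE x m :=
  le_ciSup (P.lE_bddAbove hx) n

lemma inf_le_rE {x : ℕ → ℕ} (hx : ∀ i, x i < P.k) (n : ℕ) :
    (⨅ m, P.rE x m) ≤ P.rE x n :=
  ciInf_le (P.rE_bddBelow hx) n

lemma phibarN_mem {x : ℕ → ℕ} (hx : ∀ i, x i < P.k) (n : ℕ) :
    P.lE x n ≤ P.phibarN n x ∧ P.phibarN n x ≤ P.rE x n := by
  rw [P.phibarN_eq_psi n x]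
  exact P.psi_between hx ⟨le_rfl, zero_le_one⟩

lemma phibarN_endpoint (x : ℕ → ℕ) (n : ℕ) :
    P.phibarN n x = P.lE x n ∨ P.phibarN n x = P.rE x n := by
  rw [P.phibarN_eq_psi n x]
  rcases le_total (P.psi n x 0) (P.psi n x 1) with h | h
  · exact Or.inl (min_eq_left h).symm
  · exact Or.inr (max_eq_left h).symm

end PMS
namespace PMS

variable (P : PMS)

lemma mem_I_of_between {x : ℕ → ℕ} (hx : ∀ i, x i < P.k) {y : ℝ}
    (hy : ∀ n, P.lE x n < y ∧ y < P.rE x n) : y ∈ P.I (x 0) := by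
  have e : ∀ b : ℝ, P.psi 1 x b = P.phibarJ (x 0) b := fun b => rfl
  have h := hy 1
  have h0 := P.phibarJ_mem (hx 0) 0
  have h1 := P.phibarJ_mem (hx 0) 1
  constructor
  · refine lt_of_le_of_lt ?_ h.1
    rw [lE, e 0, e 1]
    exact le_min h0.1 h1.1
  · refine lt_of_lt_of_le h.2 ?_
    rw [rE, e 0, e 1]
    exact max_le h0.2 h1.2

lemma orbit_mem (p : ℕ) : ∀ (x : ℕ → ℕ), (∀ i, x i < P.k) → ∀ (y : ℝ),
    (∀ n, P.lE x n < y ∧ y < P.rE x n) → P.T^[p] y ∈ P.I (x p) := by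
  induction p with
  | zero =>
    intro x hx y hy
    simpa using P.mem_I_of_between hx hy
  | succ p ih =>
    intro x hx y hy
    have hy0 : y ∈ P.I (x 0) := P.mem_I_of_between hx hy
    have hyI : y ∈ Icc (P.a (x 0)) (P.a (x 0 + 1)) := Ioo_subset_Icc_self hy0
    have hcomp : P.phibarJ (x 0) (P.f (x 0) y) = y := P.phibarJ_comp_f (hx 0) hyI
    set x' := fun i => x (i + 1) with hx'def
    have hx' : ∀ i, x' i < P.k := fun i => hx (i + 1)
    have e : ∀ (n : ℕ) (b : ℝ), P.psi (n + 1) x b = P.phibarJ (x 0) (P.psi n x' b) :=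
      fun n b => rfl
    have hfy : ∀ n, P.lE x' n < P.f (x 0) y ∧ P.f (x 0) y < P.rE x' n := by
      intro n
      have h := hy (n + 1)
      constructor
      · by_contra hcon
        push_neg at hcon
        have hc0 : P.f (x 0) y ≤ P.psi n x' 0 := hcon.trans (min_le_left _ _)
        have hc1 : P.f (x 0) y ≤ P.psi n x' 1 := hcon.trans (min_le_right _ _)
        cases hinc : P.inc (x 0) with
        | true =>
          have hm := P.phibarJ_mono (hx 0) hinc
          have l0 := hm hc0
          have l1 := hm hc1
          rw [hcomp] at l0 l1
          have : y ≤ P.lE x (n + 1) := by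
            rw [lE, e n 0, e n 1]; exact le_min l0 l1
          linarith [h.1]
        | false =>
          have hm := P.phibarJ_anti (hx 0) hinc
          have l0 := hm hc0
          have l1 := hm hc1
          rw [hcomp] at l0 l1
          have : P.rE x (n + 1) ≤ y := by
            rw [rE, e n 0, e n 1]; exact max_le l0 l1
          linarith [h.2]
      · by_contra hcon
        push_neg at hcon
        have hc0 : P.psi n x' 0 ≤ P.f (x 0) y := (le_max_left _ _).trans hcon
        have hc1 : P.psi n x' 1 ≤ P.f (x 0) y := (le_max_right _ _).trans hcon
        cases hinc : P.inc (x 0) with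
        | true =>
          have hm := P.phibarJ_mono (hx 0) hinc
          have l0 := hm hc0
          have l1 := hm hc1
          rw [hcomp] at l0 l1
          have : P.rE x (n + 1) ≤ y := by
            rw [rE, e n 0, e n 1]; exact max_le l0 l1
          linarith [h.2]
        | false =>
          have hm := P.phibarJ_anti (hx 0) hinc
          have l0 := hm hc0
          have l1 := hm hc1
          rw [hcomp] at l0 l1
          have : y ≤ P.lE x (n + 1) := by
            rw [lE, e n 0, e n 1]; exact le_min l0 l1
          linarith [h.1]
    have hres := ih x' hx' (P.f (x 0) y) hfy
    rw [Function.iterate_succ_apply, P.T_eq (hx 0) hy0]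
    exact hres

lemma mem_uI {u : ℝ} {j : ℕ} (hj : j < P.k) (hu : u ∈ P.I j) :
    u ∈ ⋃ i ∈ Finset.range P.k, P.I i := by
  simp only [Set.mem_iUnion]
  exact ⟨j, Finset.mem_range.mpr hj, hu⟩

lemma not_in_S {y : ℝ} (hy1 : y ∈ Icc (0 : ℝ) 1)
    (horb : ∀ m, ∃ j, j < P.k ∧ P.T^[m] y ∈ P.I j) : y ∈ Icc (0 : ℝ) 1 \ P.S := by
  refine ⟨hy1, fun hS => ?_⟩
  rw [S, Set.mem_sep_iff] at hS
  obtain ⟨-, m, hm, -⟩ := hS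
  obtain ⟨j, hj, hmem⟩ := horb m
  exact hm.2 (P.mem_uI hj hmem)

lemma valid_sup_eq_inf (hV : P.Valid) {x : ℕ → ℕ} (hx : ∀ i, x i < P.k) :
    (⨆ n, P.lE x n) = ⨅ n, P.rE x n := by
  by_contra hne
  have hlt : (⨆ n, P.lE x n) < ⨅ n, P.rE x n :=
    lt_of_le_of_ne (P.sup_le_inf hx) hne
  set L := ⨆ n, P.lE x n with hL
  set R := ⨅ n, P.rE x n with hR
  set y := (L + R) / 2 with hy
  have hbet : ∀ n, P.lE x n < y ∧ y < P.rE x n := fun n =>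
    ⟨lt_of_le_of_lt (P.lE_le_sup hx n) (by rw [hy]; linarith),
     lt_of_lt_of_le (by rw [hy]; linarith) (P.inf_le_rE hx n)⟩
  have horb : ∀ p, P.T^[p] y ∈ P.I (x p) := fun p => P.orbit_mem p x hx y hbet
  have hy0 : y ∈ P.I (x 0) := by simpa using horb 0
  have hyIcc : y ∈ Icc (0 : ℝ) 1 := P.I_subset_Icc (hx 0) hy0
  have hyS : y ∈ Icc (0 : ℝ) 1 \ P.S :=
    P.not_in_S hyIcc (fun m => ⟨x m, hx m, horb m⟩)
  have hcode : P.code y = x := funext fun p => P.idx_eq (hx p) (horb p)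
  have htnd := hV y hyS
  rw [hcode] at htnd
  have hδ : (0 : ℝ) < (R - L) / 2 := by linarith
  obtain ⟨N, hN⟩ := Metric.tendsto_atTop.mp htnd ((R - L) / 2) hδ
  have hd := hN N le_rfl
  rw [Real.dist_eq, abs_sub_lt_iff] at hd
  rcases P.phibarN_endpoint x N with he | he
  · have := P.lE_le_sup hx N
    rw [he] at hd
    rw [hy] at hd
    linarith [hd.2]
  · have := P.inf_le_rE hx N
    rw [he] at hd
    rw [hy] at hd
    linarith [hd.1]

lemma tendsto_phibarN_sup {x : ℕ → ℕ} (hx : ∀ i, x i < P.k)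
    (hEq : (⨆ n, P.lE x n) = ⨅ n, P.rE x n) :
    Tendsto (fun n => P.phibarN n x) atTop (𝓝 (⨆ n, P.lE x n)) :=
  tendsto_of_tendsto_of_tendsto_of_le_of_le (P.tendsto_lE hx) (hEq ▸ P.tendsto_rE hx)
    (fun n => (P.phibarN_mem hx n).1) (fun n => (P.phibarN_mem hx n).2)

end PMS
lemma zigzag (w : ℕ → ℝ) (y : ℝ) : ∀ K, 0 < K → min (w 0) (w K) ≤ y →
    y ≤ max (w 0) (w K) →
    ∃ j < K, min (w j) (w (j + 1)) ≤ y ∧ y ≤ max (w j) (w (j + 1)) := by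
  intro K
  induction K with
  | zero => intro h; omega
  | succ K ih =>
    intro _ h1 h2
    by_cases hK : K = 0
    · subst hK; exact ⟨0, Nat.succ_pos 0, h1, h2⟩
    · by_cases hmid : min (w K) (w (K + 1)) ≤ y ∧ y ≤ max (w K) (w (K + 1))
      · exact ⟨K, Nat.lt_succ_self K, hmid⟩
      · have hstep : min (w 0) (w K) ≤ y ∧ y ≤ max (w 0) (w K) := by
          rcases not_and_or.mp hmid with h | h
          · push_neg at h
            have hyK : y < w K := lt_of_lt_of_le h (min_le_left _ _)
            have hyK1 : y < w (K + 1) := lt_of_lt_of_le h (min_le_right _ _)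
            have h0 : w 0 ≤ y := by
              rcases min_le_iff.mp h1 with h' | h'
              · exact h'
              · linarith
            exact ⟨min_le_of_left_le h0, le_max_of_le_right hyK.le⟩
          · push_neg at h
            have hyK : w K < y := lt_of_le_of_lt (le_max_left _ _) h
            have hyK1 : w (K + 1) < y := lt_of_le_of_lt (le_max_right _ _) h
            have h0 : y ≤ w 0 := by
              rcases le_max_iff.mp h2 with h' | h'
              · exact h'
              · linarith
            exact ⟨min_le_of_right_le hyK.le, le_max_of_le_left h0⟩
        obtain ⟨j, hj, hh⟩ := ih (Nat.pos_of_ne_zero hK) hstep.1 hstep.2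
        exact ⟨j, hj.trans (Nat.lt_succ_self K), hh⟩

namespace PMS

variable (P : PMS)

lemma k_pos : 0 < P.k := lt_of_lt_of_le (by norm_num) P.two_le_k

lemma exists_digit {y : ℝ} (hy : y ∈ Icc (0 : ℝ) 1) (v : ℕ → ℕ) (n : ℕ) :
    ∃ j, j < P.k ∧ ((∀ i, v i < P.k) → P.lE v n ≤ y → y ≤ P.rE v n →
      P.lE (Function.update v n j) (n + 1) ≤ y ∧
        y ≤ P.rE (Function.update v n j) (n + 1)) := by
  by_cases H : (∀ i, v i < P.k) ∧ P.lE v n ≤ y ∧ y ≤ P.rE v n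
  · obtain ⟨hv, hl, hr⟩ := H
    set w : ℕ → ℝ := fun i => P.psi n v (P.a i) with hw
    have hw0 : w 0 = P.psi n v 0 := by rw [hw]; simp only [P.a_zero]
    have hwk : w P.k = P.psi n v 1 := by rw [hw]; simp only [P.a_last]
    have h1 : min (w 0) (w P.k) ≤ y := by rw [hw0, hwk]; exact hl
    have h2 : y ≤ max (w 0) (w P.k) := by rw [hw0, hwk]; exact hr
    obtain ⟨j, hj, hmin, hmax⟩ := zigzag w y P.k P.k_pos h1 h2
    refine ⟨j, hj, fun _ _ _ => ?_⟩
    set v' := Function.update v n j with hv'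
    have hvpref : ∀ i < n, v' i = v i := fun i hi =>
      Function.update_of_ne (Nat.ne_of_lt hi) j v
    have hsucc : ∀ b, P.psi (n + 1) v' b = P.psi n v (P.phibarJ j b) := by
      intro b
      rw [P.psi_succ_right n v' b, hv', Function.update_self,
        P.psi_prefix n v' v _ hvpref]
    have key : min (P.psi (n + 1) v' 0) (P.psi (n + 1) v' 1) = min (w j) (w (j + 1)) ∧
        max (P.psi (n + 1) v' 0) (P.psi (n + 1) v' 1) = max (w j) (w (j + 1)) := by
      rw [hsucc 0, hsucc 1, P.phibarJ_zero hj, P.phibarJ_one hj]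
      have e1 : w j = P.psi n v (P.a j) := rfl
      have e2 : w (j + 1) = P.psi n v (P.a (j + 1)) := rfl
      rw [e1, e2]
      cases hinc : P.inc j with
      | true => exact ⟨by simp, by simp⟩
      | false =>
        simp only [Bool.false_eq_true, if_false]
        exact ⟨min_comm _ _, max_comm _ _⟩
    constructor
    · show min (P.psi (n + 1) v' 0) (P.psi (n + 1) v' 1) ≤ y
      rw [key.1]; exact hmin
    · show y ≤ max (P.psi (n + 1) v' 0) (P.psi (n + 1) v' 1)
      rw [key.2]; exact hmax
  · exact ⟨0, P.k_pos, fun h1 h2 h3 => absurd ⟨h1, h2, h3⟩ H⟩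

end PMS

/-- Recursive digit construction. -/
noncomputable def buildSeq (F : (ℕ → ℕ) → ℕ → ℕ) : ℕ → ℕ
  | n => F (fun i => if h : i < n then buildSeq F i else 0) n
namespace PMS

variable (P : PMS)

lemma valid_wellDefined (hV : P.Valid) : P.WellDefined := fun x hx =>
  ⟨_, P.tendsto_phibarN_sup hx (P.valid_sup_eq_inf hV hx)⟩

lemma valid_surj (hV : P.Valid) {y : ℝ} (hy : y ∈ Icc (0 : ℝ) 1) :
    ∃ x : ℕ → ℕ, (∀ n, x n < P.k) ∧
      Tendsto (fun n => P.phibarN n x) atTop (𝓝 y) := by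
  have hstep := fun v n => P.exists_digit hy v n
  choose F hF1 hF2 using hstep
  have hxd : ∀ n, buildSeq F n < P.k := by
    intro n; rw [buildSeq]; exact hF1 _ n
  have hinv : ∀ n, P.lE (buildSeq F) n ≤ y ∧ y ≤ P.rE (buildSeq F) n := by
    intro n
    induction n with
    | zero => rw [P.lE_zero, P.rE_zero]; exact ⟨hy.1, hy.2⟩
    | succ n ih =>
      set v : ℕ → ℕ := fun i => if h : i < n then buildSeq F i else 0 with hvdef
      have hv : ∀ i, v i < P.k := by
        intro i; rw [hvdef]; dsimp only; split
        · exact hxd i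
        · exact P.k_pos
      have hvpref : ∀ i < n, v i = buildSeq F i := by
        intro i hi; rw [hvdef]; dsimp only; rw [dif_pos hi]
      have hlv : P.lE v n = P.lE (buildSeq F) n := by
        rw [lE, lE, P.psi_prefix n v (buildSeq F) 0 hvpref,
          P.psi_prefix n v (buildSeq F) 1 hvpref]
      have hrv : P.rE v n = P.rE (buildSeq F) n := by
        rw [rE, rE, P.psi_prefix n v (buildSeq F) 0 hvpref,
          P.psi_prefix n v (buildSeq F) 1 hvpref]
      have hxn : buildSeq F n = F v n := by rw [hvdef]; rw [buildSeq]
      have h2 := hF2 v n hv (hlv ▸ ih.1) (hrv ▸ ih.2)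
      have hupd : ∀ i < n + 1, Function.update v n (F v n) i = buildSeq F i := by
        intro i hi
        rcases Nat.lt_succ_iff_lt_or_eq.mp hi with h | h
        · rw [Function.update_of_ne (Nat.ne_of_lt h), hvpref i h]
        · subst h; rw [Function.update_self, hxn]
      have e : ∀ b : ℝ, P.psi (n + 1) (buildSeq F) b
          = P.psi (n + 1) (Function.update v n (F v n)) b :=
        fun b => P.psi_prefix _ _ _ b (fun i hi => (hupd i hi).symm)
      constructor
      · show min (P.psi (n + 1) (buildSeq F) 0) (P.psi (n + 1) (buildSeq F) 1) ≤ y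
        rw [e 0, e 1]; exact h2.1
      · show y ≤ max (P.psi (n + 1) (buildSeq F) 0) (P.psi (n + 1) (buildSeq F) 1)
        rw [e 0, e 1]; exact h2.2
  have hEq := P.valid_sup_eq_inf hV hxd
  have hle : (⨆ n, P.lE (buildSeq F) n) ≤ y := ciSup_le fun n => (hinv n).1
  have hge : y ≤ ⨆ n, P.lE (buildSeq F) n := by
    rw [hEq]; exact le_ciInf fun n => (hinv n).2
  have hyeq : (⨆ n, P.lE (buildSeq F) n) = y := le_antisymm hle hge
  exact ⟨buildSeq F, hxd, hyeq ▸ P.tendsto_phibarN_sup hxd hEq⟩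

lemma orbit_exists {y : ℝ} (hy : y ∈ Icc (0 : ℝ) 1 \ P.S) :
    ∀ m, ∃ j, j < P.k ∧ P.T^[m] y ∈ P.I j := by
  obtain ⟨hyI, hyS⟩ := hy
  classical
  have hnS0 : ∀ m, P.T^[m] y ∉ P.S0 := by
    intro m hm
    by_cases hex : ∃ m, P.T^[m] y ∈ P.S0
    · apply hyS
      rw [S, Set.mem_sep_iff]
      exact ⟨hyI, Nat.find hex, Nat.find_spec hex, fun i hi => Nat.find_min hex hi⟩
    · exact hex ⟨m, hm⟩
  intro m
  induction m with
  | zero =>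
    have h0 : y ∉ P.S0 := by simpa using hnS0 0
    have hU : y ∈ ⋃ j ∈ Finset.range P.k, P.I j := by
      by_contra hc; exact h0 ⟨hyI, hc⟩
    simp only [Set.mem_iUnion] at hU
    obtain ⟨j, hj, hmem⟩ := hU
    exact ⟨j, Finset.mem_range.mp hj, by simpa using hmem⟩
  | succ m ih =>
    obtain ⟨j, hj, hmem⟩ := ih
    have hT : P.T^[m + 1] y = P.f j (P.T^[m] y) := by
      rw [Function.iterate_succ_apply', P.T_eq hj hmem]
    have hIcc : P.T^[m + 1] y ∈ Icc (0 : ℝ) 1 := by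
      rw [hT]; exact P.f_range j hj (Ioo_subset_Icc_self hmem)
    have hU : P.T^[m + 1] y ∈ ⋃ j ∈ Finset.range P.k, P.I j := by
      by_contra hc; exact hnS0 (m + 1) ⟨hIcc, hc⟩
    simp only [Set.mem_iUnion] at hU
    obtain ⟨j', hj', hmem'⟩ := hU
    exact ⟨j', Finset.mem_range.mp hj', hmem'⟩

lemma valid_of_surj
    (hS : ∀ y ∈ Icc (0 : ℝ) 1, ∃ x : ℕ → ℕ, (∀ n, x n < P.k) ∧
      Tendsto (fun n => P.phibarN n x) atTop (𝓝 y)) :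
    P.Valid := by
  intro y hy
  obtain ⟨x', hx', htnd⟩ := hS y hy.1
  have horb := P.orbit_exists hy
  have hcode_mem : ∀ m, P.T^[m] y ∈ P.I (P.code y m) ∧ P.code y m < P.k := by
    intro m
    obtain ⟨j, hj, hmem⟩ := horb m
    have he : P.code y m = j := P.idx_eq hj hmem
    exact ⟨he ▸ hmem, he ▸ hj⟩
  have heq : ∀ n m, P.phibarN (m + 1) (fun i => x' (i + n))
      = P.phibarJ (x' n) (P.phibarN m (fun i => x' (i + (n + 1)))) := by
    intro n m
    rw [phibarN]
    congr 1
    · rw [Nat.zero_add]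
    · congr 1
      funext i
      congr 1
      omega
  have C : ∀ n, Tendsto (fun m => P.phibarN m (fun i => x' (i + n))) atTop
      (𝓝 (P.T^[n] y)) := by
    intro n
    induction n with
    | zero =>
      have e : (fun i => x' (i + 0)) = x' := funext fun i => by rw [Nat.add_zero]
      rw [e]
      simpa using htnd
    | succ n ih =>
      obtain ⟨hmem, hjk⟩ := hcode_mem n
      have hshift : Tendsto (fun m => P.phibarN (m + 1) (fun i => x' (i + n)))
          atTop (𝓝 (P.T^[n] y)) := ih.comp (tendsto_add_atTop_nat 1)
      have hlim_mem : P.T^[n] y ∈ Icc (P.a (x' n)) (P.a (x' n + 1)) := by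
        refine IsClosed.mem_of_tendsto isClosed_Icc hshift ?_
        filter_upwards with m
        rw [heq n m]
        exact P.phibarJ_mem (hx' n) _
      have hdig : x' n = P.code y n := P.index_unique (hx' n) hjk hmem hlim_mem
      have hfun : (fun m => P.phibarN (m + 1) (fun i => x' (i + n)))
          = fun m => P.phibarJ (P.code y n)
              (P.phibarN m (fun i => x' (i + (n + 1)))) := by
        funext m; rw [heq n m, hdig]
      rw [hfun] at hshift
      have hres := P.tendsto_of_phibarJ hjk hmem hshift
      have hTn : P.T^[n + 1] y = P.f (P.code y n) (P.T^[n] y) := by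
        rw [Function.iterate_succ_apply', P.T_eq hjk hmem]
      rw [hTn]
      exact hres
  have hdig : ∀ n, x' n = P.code y n := by
    intro n
    obtain ⟨hmem, hjk⟩ := hcode_mem n
    have hshift : Tendsto (fun m => P.phibarN (m + 1) (fun i => x' (i + n)))
        atTop (𝓝 (P.T^[n] y)) := (C n).comp (tendsto_add_atTop_nat 1)
    have hlim_mem : P.T^[n] y ∈ Icc (P.a (x' n)) (P.a (x' n + 1)) := by
      refine IsClosed.mem_of_tendsto isClosed_Icc hshift ?_
      filter_upwards with m
      rw [heq n m]
      exact P.phibarJ_mem (hx' n) _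
    exact P.index_unique (hx' n) hjk hmem hlim_mem
  have hxc : x' = P.code y := funext hdig
  rw [← hxc]
  exact htnd

end PMS
/-- **Validity criterion via surjectivity.** In the piecewise monotone setting, the
φ-expansion is valid if and only if `φ̄_∞` is well-defined on all of `A^ℕ` and the
resulting map `φ̄_∞ : A^ℕ → [0,1]` is surjective. -/
theorem validity_iff_surjective (P : PMS) :
    P.Valid ↔
      (P.WellDefined ∧
        ∀ y ∈ Set.Icc (0 : ℝ) 1, ∃ x : ℕ → ℕ, (∀ n, x n < P.k) ∧
          Filter.Tendsto (fun n => P.phibarN n x) Filter.atTop (nhds y)) := by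
  constructor
  · intro hV
    exact ⟨P.valid_wellDefined hV, fun y hy => P.valid_surj hV hy⟩
  · rintro ⟨-, hS⟩
    exact P.valid_of_surj hS
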